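/- (Limit case of q-Chu–Vandermonde) For a nonnegative integer n, nonzero complex q not a root of unity, and complex a with (a;q)_k ≠ 0 for 0 ≤ k ≤ n: ∑_{k=0}^{n} (q^{-n};q)_k / [(q;q)_k (a;q)_k] · q^k = q^{C(n,2)} (−a)^n / (a;q)_n, where C(n,2) = n(n-1)/2. -/

import Mathlib

open Finset

/-- Shift lemma for q-Pochhammer-style products. -/
lemma qcv_Pshift (q x : ℂ) (k : ℕ) :
    (∏ j ∈ Finset.range k, (1 - x * q ^ j)) * (1 - x * q ^ k)
      = (1 - x) * ∏ j ∈ Finset.range k, (1 - (x * q) * q ^ j) := by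
  rw [← Finset.prod_range_succ, Finset.prod_range_succ']
  rw [mul_comm]
  simp only [pow_zero, mul_one]
  congr 1
  apply Finset.prod_congr rfl
  intro j _
  rw [pow_succ]
  ring

lemma qcv_Cshift (u t C C' : ℂ) (hu : u ≠ 0)
    (hps : C * (1 - u⁻¹ * t) = (1 - u⁻¹) * C') :
    C' * (u - 1) = C * (u - t) := by
  have e1 : (1 - u⁻¹ * t) * u = u - t := by field_simp
  have e2 : (1 - u⁻¹) * u = u - 1 := by field_simp
  linear_combination (-u) * hps + C * e1 - C' * e2

/-- The telescoping certificate function (q-Zeilberger certificate). -/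
noncomputable def qcvG (a q : ℂ) (N : ℕ) (k : ℕ) : ℂ :=
  (∏ j ∈ Finset.range k, (1 - (q ^ N)⁻¹ * q ^ j)) /
      ((∏ j ∈ Finset.range k, (1 - q * q ^ j)) *
        (∏ j ∈ Finset.range k, (1 - a * q ^ j))) * q ^ k *
    (q ^ N * (1 - q ^ k) * (q - a * q ^ k) /
      (q ^ k * ((q - a * q ^ N) * (q ^ N - 1))))

set_option maxHeartbeats 1000000 in
/-- Scalar form of the per-index certificate identity. -/
lemma qcv_scalar (a q t v : ℂ) (hq : q ≠ 0) (ht : t ≠ 0) (hv : v ≠ 0)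
    (hA1 : 1 - a * t ≠ 0) (hB1 : 1 - q * t ≠ 0)
    (hu1 : q * v - 1 ≠ 0) (hav : 1 - a * v ≠ 0) :
    (1 : ℂ) =
      -(a * v) / (1 - a * v) * ((q * v - t) / (q * v - 1))
      + (1 - (q * v)⁻¹ * t) / ((1 - q * t) * (1 - a * t)) * q
          * (q * v * (1 - t * q) * (q - a * (t * q)) /
              (t * q * ((q - a * (q * v)) * (q * v - 1))))
        - q * v * (1 - t) * (q - a * t) / (t * ((q - a * (q * v)) * (q * v - 1))) := by
  have hu : q * v ≠ 0 := mul_ne_zero hq hv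
  have hau : q - a * (q * v) ≠ 0 := by
    have h : q - a * (q * v) = q * (1 - a * v) := by ring
    rw [h]; exact mul_ne_zero hq hav
  have h2 : (1 - (q * v)⁻¹ * t) / ((1 - q * t) * (1 - a * t)) * q
          * (q * v * (1 - t * q) * (q - a * (t * q)) /
              (t * q * ((q - a * (q * v)) * (q * v - 1))))
      = ((q * v - t) * ((1 - t * q) * (q - a * (t * q)))) /
          ((1 - q * t) * (1 - a * t) * (t * ((q - a * (q * v)) * (q * v - 1)))) := by
    rw [eq_div_iff (by apply_rules [mul_ne_zero])]
    have hav' : 1 - v * a ≠ 0 := by rwa [mul_comm v a]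
    field_simp
  rw [h2, div_mul_div_comm]
  rw [div_add_div _ _ (by apply_rules [mul_ne_zero]) (by apply_rules [mul_ne_zero]),
    div_sub_div _ _ (by apply_rules [mul_ne_zero]) (by apply_rules [mul_ne_zero]),
    eq_div_iff (by apply_rules [mul_ne_zero])]
  ring

set_option maxHeartbeats 1000000 in
/-- The key per-index algebraic identity. -/
lemma qcv_key (a q t v A B C C' : ℂ) (hq : q ≠ 0) (ht : t ≠ 0) (hv : v ≠ 0)
    (hA : A ≠ 0) (hB : B ≠ 0) (hA1 : 1 - a * t ≠ 0) (hB1 : 1 - q * t ≠ 0)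
    (hu1 : q * v - 1 ≠ 0) (hav : 1 - a * v ≠ 0)
    (hC' : C' * (q * v - 1) = C * (q * v - t)) :
    C / (B * A) * t =
      -(a * v) / (1 - a * v) * (C' / (B * A) * t)
      + (C * (1 - (q * v)⁻¹ * t) / (B * (1 - q * t) * (A * (1 - a * t))) * (t * q)
          * (q * v * (1 - t * q) * (q - a * (t * q)) /
              (t * q * ((q - a * (q * v)) * (q * v - 1))))
        - C / (B * A) * t *
            (q * v * (1 - t) * (q - a * t) / (t * ((q - a * (q * v)) * (q * v - 1))))) := by
  have hC'' : C' = C * (q * v - t) / (q * v - 1) :=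
    (eq_div_iff hu1).mpr hC'
  rw [hC'']
  have hs := qcv_scalar a q t v hq ht hv hA1 hB1 hu1 hav
  simp only [div_eq_mul_inv, mul_inv] at hs ⊢
  linear_combination (C * B⁻¹ * A⁻¹ * t) * hs

theorem q_chu_vandermonde_limit (a q : ℂ) (hq : q ≠ 0)
    (hroot : ∀ m : ℕ, 0 < m → q ^ m ≠ 1) (n : ℕ)
    (hak : ∀ k ≤ n, (∏ j ∈ Finset.range k, (1 - a * q ^ j)) ≠ 0) :
    (∑ k ∈ Finset.range (n + 1),
        (∏ j ∈ Finset.range k, (1 - q ^ (-(n : ℤ)) * q ^ j)) /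
          ((∏ j ∈ Finset.range k, (1 - q * q ^ j)) *
            (∏ j ∈ Finset.range k, (1 - a * q ^ j))) * q ^ k) =
      q ^ (n.choose 2) * (-a) ^ n / (∏ j ∈ Finset.range n, (1 - a * q ^ j)) := by
  have hqk : ∀ k : ℕ, (q : ℂ) ^ k ≠ 0 := fun k => pow_ne_zero k hq
  have hqfac : ∀ j : ℕ, (1 : ℂ) - q * q ^ j ≠ 0 := by
    intro j hcontra
    apply hroot (j + 1) (Nat.succ_pos j)
    have h1 : q ^ (j + 1) = q * q ^ j := by ring
    rw [h1]
    exact (sub_eq_zero.mp hcontra).symm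
  have hB : ∀ k : ℕ, (∏ j ∈ Finset.range k, (1 - q * q ^ j)) ≠ 0 := by
    intro k
    exact Finset.prod_ne_zero_iff.mpr fun j _ => hqfac j
  have hafac : ∀ j, j < n → (1 : ℂ) - a * q ^ j ≠ 0 := by
    intro j hj
    have h1 := hak (j + 1) (by omega)
    exact Finset.prod_ne_zero_iff.mp h1 j (Finset.mem_range.mpr (Nat.lt_succ_self j))
  suffices H : ∀ m, m ≤ n →
      (∑ k ∈ Finset.range (m + 1),
        (∏ j ∈ Finset.range k, (1 - q ^ (-(m : ℤ)) * q ^ j)) /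
          ((∏ j ∈ Finset.range k, (1 - q * q ^ j)) *
            (∏ j ∈ Finset.range k, (1 - a * q ^ j))) * q ^ k) =
      q ^ (m.choose 2) * (-a) ^ m / (∏ j ∈ Finset.range m, (1 - a * q ^ j)) by
    exact H n le_rfl
  intro m
  induction m with
  | zero => intro _; simp
  | succ m ih =>
    intro hmn
    have hmn' : m ≤ n := Nat.le_of_succ_le hmn
    have ihm := ih hmn'
    rw [zpow_neg, zpow_natCast] at ihm ⊢
    have hu0 : (q : ℂ) ^ (m + 1) ≠ 0 := hqk (m + 1)
    have hu1 : (q : ℂ) ^ (m + 1) - 1 ≠ 0 :=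
      sub_ne_zero.mpr (hroot (m + 1) (Nat.succ_pos m))
    have hav : (1 : ℂ) - a * q ^ m ≠ 0 := hafac m (by omega)
    have hau : (q : ℂ) - a * q ^ (m + 1) ≠ 0 := by
      have h1 : (q : ℂ) - a * q ^ (m + 1) = q * (1 - a * q ^ m) := by ring
      rw [h1]; exact mul_ne_zero hq hav
    set G := qcvG a q (m + 1) with hG
    have hstep : ∀ k ∈ Finset.range (m + 1),
        (∏ j ∈ Finset.range k, (1 - (q ^ (m + 1))⁻¹ * q ^ j)) /
          ((∏ j ∈ Finset.range k, (1 - q * q ^ j)) *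
            (∏ j ∈ Finset.range k, (1 - a * q ^ j))) * q ^ k
        = -(a * q ^ m) / (1 - a * q ^ m) *
            ((∏ j ∈ Finset.range k, (1 - (q ^ m)⁻¹ * q ^ j)) /
              ((∏ j ∈ Finset.range k, (1 - q * q ^ j)) *
                (∏ j ∈ Finset.range k, (1 - a * q ^ j))) * q ^ k)
          + (G (k + 1) - G k) := by
      intro k hk
      rw [Finset.mem_range] at hk
      have hkn : k < n := by omega
      have hC' : (∏ j ∈ Finset.range k, (1 - (q ^ m)⁻¹ * q ^ j)) * (q ^ (m + 1) - 1)
          = (∏ j ∈ Finset.range k, (1 - (q ^ (m + 1))⁻¹ * q ^ j)) *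
              (q ^ (m + 1) - q ^ k) := by
        have hps := qcv_Pshift q ((q ^ (m + 1))⁻¹) k
        have hxq : ((q : ℂ) ^ (m + 1))⁻¹ * q = (q ^ m)⁻¹ := by
          rw [pow_succ, mul_inv, mul_assoc, inv_mul_cancel₀ hq, mul_one]
        rw [hxq] at hps
        exact qcv_Cshift (q ^ (m + 1)) (q ^ k) _ _ hu0 hps
      have hGk1 : G (k + 1) =
          (∏ j ∈ Finset.range k, (1 - (q ^ (m + 1))⁻¹ * q ^ j)) *
              (1 - (q ^ (m + 1))⁻¹ * q ^ k) /
            ((∏ j ∈ Finset.range k, (1 - q * q ^ j)) * (1 - q * q ^ k) *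
              ((∏ j ∈ Finset.range k, (1 - a * q ^ j)) * (1 - a * q ^ k))) * (q ^ k * q) *
            (q ^ (m + 1) * (1 - q ^ k * q) * (q - a * (q ^ k * q)) /
              (q ^ k * q * ((q - a * q ^ (m + 1)) * (q ^ (m + 1) - 1)))) := by
        rw [hG]
        unfold qcvG
        rw [Finset.prod_range_succ, Finset.prod_range_succ, Finset.prod_range_succ,
          pow_succ q k]
      have hGk : G k =
          (∏ j ∈ Finset.range k, (1 - (q ^ (m + 1))⁻¹ * q ^ j)) /
            ((∏ j ∈ Finset.range k, (1 - q * q ^ j)) *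
              (∏ j ∈ Finset.range k, (1 - a * q ^ j))) * q ^ k *
            (q ^ (m + 1) * (1 - q ^ k) * (q - a * q ^ k) /
              (q ^ k * ((q - a * q ^ (m + 1)) * (q ^ (m + 1) - 1)))) := rfl
      rw [hGk1, hGk]
      rw [pow_succ' q m] at hC' ⊢
      exact qcv_key a q (q ^ k) (q ^ m)
        (∏ j ∈ Finset.range k, (1 - a * q ^ j))
        (∏ j ∈ Finset.range k, (1 - q * q ^ j))
        (∏ j ∈ Finset.range k, (1 - (q * q ^ m)⁻¹ * q ^ j))
        (∏ j ∈ Finset.range k, (1 - (q ^ m)⁻¹ * q ^ j))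
        hq (hqk k) (hqk m) (hak k (by omega)) (hB k)
        (hafac k hkn) (hqfac k)
        (by rw [← pow_succ' q m]; exact hu1)
        hav hC'
    rw [Finset.sum_range_succ, Finset.sum_congr rfl hstep, Finset.sum_add_distrib,
      ← Finset.mul_sum, Finset.sum_range_sub, ihm]
    have hG0 : G 0 = 0 := by simp [hG, qcvG]
    have hzero : (∏ j ∈ Finset.range (m + 1), (1 - (q ^ (m + 1))⁻¹ * q ^ j)) /
          ((∏ j ∈ Finset.range (m + 1), (1 - q * q ^ j)) *
            (∏ j ∈ Finset.range (m + 1), (1 - a * q ^ j))) * q ^ (m + 1)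
        + G (m + 1) = 0 := by
      have hGm : G (m + 1) =
          (∏ j ∈ Finset.range (m + 1), (1 - (q ^ (m + 1))⁻¹ * q ^ j)) /
            ((∏ j ∈ Finset.range (m + 1), (1 - q * q ^ j)) *
              (∏ j ∈ Finset.range (m + 1), (1 - a * q ^ j))) * q ^ (m + 1) *
            (q ^ (m + 1) * (1 - q ^ (m + 1)) * (q - a * q ^ (m + 1)) /
              (q ^ (m + 1) * ((q - a * q ^ (m + 1)) * (q ^ (m + 1) - 1)))) := rfl
      have hy : q ^ (m + 1) * (1 - q ^ (m + 1)) * (q - a * q ^ (m + 1)) /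
          (q ^ (m + 1) * ((q - a * q ^ (m + 1)) * (q ^ (m + 1) - 1))) = -1 := by
        rw [div_eq_iff (mul_ne_zero hu0 (mul_ne_zero hau hu1))]
        ring
      rw [hGm, hy]
      ring
    have hrhs : q ^ ((m + 1).choose 2) * (-a) ^ (m + 1) /
          (∏ j ∈ Finset.range (m + 1), (1 - a * q ^ j))
        = -(a * q ^ m) / (1 - a * q ^ m) *
            (q ^ (m.choose 2) * (-a) ^ m / (∏ j ∈ Finset.range m, (1 - a * q ^ j))) := by
      have hch : (m + 1).choose 2 = m + m.choose 2 := by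
        rw [Nat.choose_succ_succ, Nat.choose_one_right]
      have hPa : (∏ j ∈ Finset.range m, (1 - a * q ^ j)) ≠ 0 := hak m hmn'
      rw [Finset.prod_range_succ, hch, pow_add, pow_succ]
      field_simp
    rw [hG0, hrhs]
    linear_combination hzero
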